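/- Let G be a finite group with subgroups A, B, M satisfying conditions (1)–(4) of the soft plane construction. Then M is uniquely determined by A and B: if M' is another subgroup with A, B, M' satisfying the same conditions, then M' = M. -/

import Mathlib

open scoped Pointwise

section Helpers

variable {G : Type*} [Group G] [Finite G]

private lemma card_mul_univ' (H K : Subgroup G)
    (h : (H : Set G) * (K : Set G) = Set.univ) :
    Nat.card H * Nat.card K = Nat.card G * Nat.card (H ⊓ K : Subgroup G) := by
  have hex : ∀ x : G, ∃ a b : G, (a ∈ H ∧ b ∈ K) ∧ a * b = x := by
    intro x
    have hx : x ∈ (H : Set G) * (K : Set G) := by rw [h]; trivial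
    obtain ⟨a, ha, b, hb, hab⟩ := hx
    exact ⟨a, b, ⟨ha, hb⟩, hab⟩
  choose f g hfg hmul using hex
  have hf : ∀ x, f x ∈ H := fun x => (hfg x).1
  have hg : ∀ x, g x ∈ K := fun x => (hfg x).2
  have key : ∀ (p : ↥H × ↥K), (f (↑p.1 * ↑p.2))⁻¹ * ↑p.1 = g (↑p.1 * ↑p.2) * (↑p.2 : G)⁻¹ := by
    intro p
    apply mul_right_cancel (b := (↑p.2 : G))
    simp only [mul_assoc, inv_mul_cancel, mul_one]
    rw [inv_mul_eq_iff_eq_mul]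
    simpa [mul_assoc] using (hmul (↑p.1 * ↑p.2)).symm
  have e : (↥H × ↥K) ≃ G × ↥(H ⊓ K : Subgroup G) := by
    refine Equiv.ofBijective (fun p => ((↑p.1 * ↑p.2 : G),
      ⟨(f (↑p.1 * ↑p.2))⁻¹ * ↑p.1, Subgroup.mem_inf.mpr
        ⟨mul_mem (inv_mem (hf _)) p.1.2, by rw [key p]; exact mul_mem (hg _) (inv_mem p.2.2)⟩⟩)) ⟨?_, ?_⟩
    · rintro ⟨a, b⟩ ⟨a', b'⟩ hpq
      obtain ⟨h1, h2⟩ := Prod.mk.injEq .. ▸ hpq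
      have h2' := congrArg Subtype.val h2
      simp only at h2' h1
      rw [h1] at h2'
      have ha : (a : G) = a' := by
        have := mul_left_cancel h2'
        exact this
      have hb : (b : G) = b' := by
        have := h1
        rw [ha] at this
        exact mul_left_cancel this
      exact Prod.ext (Subtype.ext ha) (Subtype.ext hb)
    · rintro ⟨y, u, hu⟩
      obtain ⟨huH, huK⟩ := Subgroup.mem_inf.mp hu
      refine ⟨⟨⟨f y * u, mul_mem (hf y) huH⟩, ⟨u⁻¹ * g y, mul_mem (inv_mem huK) (hg y)⟩⟩, ?_⟩
      have hy : (f y * u) * (u⁻¹ * g y) = y := by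
        simp [mul_assoc, hmul y]
      refine Prod.ext hy ?_
      apply Subtype.ext
      simp only
      rw [hy]
      group
  have := Nat.card_congr e
  rwa [Nat.card_prod, Nat.card_prod] at this

private lemma mem_of_mem_inf' (A B U : Subgroup G) (hAU : A ≤ U)
    (hcard : Nat.card (U ⊓ B : Subgroup G) ≤ Nat.card (A ⊓ B : Subgroup G)) :
    ∀ x : G, x ∈ B → x ∈ U → x ∈ A := by
  have h := Subgroup.eq_of_le_of_card_ge (inf_le_inf_right B hAU) hcard
  intro x hxB hxU
  have hx : x ∈ U ⊓ B := Subgroup.mem_inf.mpr ⟨hxU, hxB⟩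
  rw [← h] at hx
  exact (Subgroup.mem_inf.mp hx).1

private lemma key_aba' (A B M' K H : Subgroup G) (n k : ℕ)
    (hk : 0 < k)
    (hG : Nat.card G = n ^ 3 * k)
    (hA : Nat.card A = n * k) (hB : Nat.card B = n * k)
    (hQ : Nat.card (A ⊓ B : Subgroup G) = k)
    (hAK : A ≤ K) (hKcard : Nat.card K = n ^ 2 * k)
    (hKB : ∀ x : G, x ∈ B → x ∈ K → x ∈ A)
    (hAH : A ≤ H)
    (hHB : ∀ x : G, x ∈ B → x ∈ H → x ∈ A)
    (hM'H : M' ≤ H)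
    (h4 : ((A : Set G) * (B : Set G)) ∩ ((B : Set G) * (A : Set G)) =
      (A : Set G) ∪ (B : Set G)) :
    (M' : Set G) ⊆ (K : Set G) := by
  classical
  set T : Set G := (A : Set G) * (B : Set G) * (A : Set G) with hT
  have hTmem : ∀ x ∈ T, ∃ a₁ ∈ A, ∃ b ∈ B, ∃ a₂ ∈ A, a₁ * b * a₂ = x := by
    intro x hx
    obtain ⟨u, hu, a₂, ha₂, hua⟩ := hx
    obtain ⟨a₁, ha₁, b, hb, hab⟩ := hu
    subst hua hab
    exact ⟨a₁, ha₁, b, hb, a₂, ha₂, rfl⟩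
  have hTsub : ∀ (L : Subgroup G), A ≤ L → (∀ x : G, x ∈ B → x ∈ L → x ∈ A) →
      ∀ x ∈ T, x ∈ L → x ∈ A := by
    intro L hAL hLB x hxT hxL
    obtain ⟨a₁, ha₁, b, hb, a₂, ha₂, habx⟩ := hTmem x hxT
    have hbL : b ∈ L := by
      have : b = a₁⁻¹ * x * a₂⁻¹ := by rw [← habx]; group
      rw [this]
      exact mul_mem (mul_mem (inv_mem (hAL ha₁)) hxL) (inv_mem (hAL ha₂))
    have hbA : b ∈ A := hLB b hb hbL
    rw [← habx]
    exact mul_mem (mul_mem ha₁ hbA) ha₂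
  set F : ↥A × ↥B × ↥A → G := fun p => ↑p.1 * ↑p.2.1 * ↑p.2.2 with hF
  have hFT : ∀ p : ↥A × ↥B × ↥A, F p ∈ T :=
    fun p => Set.mul_mem_mul (Set.mul_mem_mul p.1.2 p.2.1.2) p.2.2.2
  have main : ∀ p q : ↥A × ↥B × ↥A, F p ∉ A → F q = F p →
      ((↑q.1)⁻¹ * (↑p.1 : G) ∈ A ⊓ B) ∧ ((↑q.2.2 : G) * (↑p.2.2 : G)⁻¹ ∈ A ⊓ B) := by
    rintro ⟨a₁, b, a₂⟩ ⟨a₁', b', a₂'⟩ hpA hqp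
    simp only [hF] at hqp hpA
    have hu : (↑a₁' : G)⁻¹ * ↑a₁ * ↑b = ↑b' * ((↑a₂' : G) * (↑a₂ : G)⁻¹) := by
      apply mul_right_cancel (b := (↑a₂ : G))
      simp only [mul_assoc, inv_mul_cancel, mul_one]
      rw [inv_mul_eq_iff_eq_mul]
      simpa [mul_assoc] using hqp.symm
    have huAB : (↑a₁' : G)⁻¹ * ↑a₁ * ↑b ∈
        ((A : Set G) * (B : Set G)) ∩ ((B : Set G) * (A : Set G)) := by
      constructor
      · exact Set.mul_mem_mul (mul_mem (inv_mem a₁'.2) a₁.2) b.2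
      · rw [hu]
        exact Set.mul_mem_mul b'.2 (mul_mem a₂'.2 (inv_mem a₂.2))
    rw [h4] at huAB
    rcases huAB with huA | huB
    · exfalso
      apply hpA
      have hbA : (↑b : G) ∈ A := by
        have hb' : (↑b : G) = ((↑a₁' : G)⁻¹ * ↑a₁)⁻¹ * ((↑a₁' : G)⁻¹ * ↑a₁ * ↑b) := by group
        rw [hb']
        exact mul_mem (inv_mem (mul_mem (inv_mem a₁'.2) a₁.2)) huA
      exact mul_mem (mul_mem a₁.2 hbA) a₂.2
    · constructor
      · refine Subgroup.mem_inf.mpr ⟨mul_mem (inv_mem a₁'.2) a₁.2, ?_⟩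
        have h1' : (↑a₁' : G)⁻¹ * ↑a₁ = ((↑a₁' : G)⁻¹ * ↑a₁ * ↑b) * (↑b : G)⁻¹ := by group
        rw [h1']
        exact mul_mem huB (inv_mem b.2)
      · refine Subgroup.mem_inf.mpr ⟨mul_mem a₂'.2 (inv_mem a₂.2), ?_⟩
        have h2' : (↑a₂' : G) * (↑a₂ : G)⁻¹ = (↑b' : G)⁻¹ * ((↑a₁' : G)⁻¹ * ↑a₁ * ↑b) := by
          rw [hu]; group
        rw [h2']
        exact mul_mem (inv_mem b'.2) huB
  have hin : Nat.card {p : ↥A × ↥B × ↥A // F p ∈ A} = (n * k) * (k * (n * k)) := by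
    have hmemb : ∀ p : {p : ↥A × ↥B × ↥A // F p ∈ A}, (↑(↑p : ↥A × ↥B × ↥A).2.1 : G) ∈ A ⊓ B := by
      rintro ⟨⟨a1, b, a2⟩, hp⟩
      simp only [hF] at hp
      refine Subgroup.mem_inf.mpr ⟨?_, b.2⟩
      have hb' : (↑b : G) = (↑a1 : G)⁻¹ * (↑a1 * ↑b * ↑a2) * (↑a2 : G)⁻¹ := by group
      rw [hb']
      exact mul_mem (mul_mem (inv_mem a1.2) hp) (inv_mem a2.2)
    have e : {p : ↥A × ↥B × ↥A // F p ∈ A} ≃ ↥A × ↥(A ⊓ B : Subgroup G) × ↥A := by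
      refine Equiv.ofBijective
        (fun p => ((↑p : ↥A × ↥B × ↥A).1, ⟨(↑(↑p : ↥A × ↥B × ↥A).2.1 : G), hmemb p⟩,
          (↑p : ↥A × ↥B × ↥A).2.2)) ⟨?_, ?_⟩
      · rintro ⟨⟨x1, x2, x3⟩, hx⟩ ⟨⟨y1, y2, y3⟩, hy⟩ hxy
        simp only [Prod.mk.injEq, Subtype.mk.injEq] at hxy
        obtain ⟨h1, h2, h3⟩ := hxy
        apply Subtype.ext
        simp only [Prod.mk.injEq]
        exact ⟨h1, Subtype.ext h2, h3⟩
      · rintro ⟨a1, q, a2⟩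
        obtain ⟨hqA, hqB⟩ := Subgroup.mem_inf.mp q.2
        refine ⟨⟨(a1, ⟨(↑q : G), hqB⟩, a2), ?_⟩, ?_⟩
        · simp only [hF]
          exact mul_mem (mul_mem a1.2 hqA) a2.2
        · simp only [Prod.mk.injEq, Subtype.mk.injEq]
    rw [Nat.card_congr e, Nat.card_prod, Nat.card_prod, hA, hQ]
  have hout : Nat.card {p : ↥A × ↥B × ↥A // F p ∉ A} ≤ (T \ (A : Set G)).ncard * (k * k) := by
    have hrep : ∀ y : G, ∃ p : ↥A × ↥B × ↥A, y ∈ T → F p = y := by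
      intro y
      by_cases hy : y ∈ T
      · obtain ⟨a₁, ha₁, b, hb, a₂, ha₂, habx⟩ := hTmem y hy
        exact ⟨⟨⟨a₁, ha₁⟩, ⟨b, hb⟩, ⟨a₂, ha₂⟩⟩, fun _ => habx⟩
      · exact ⟨⟨1, 1, 1⟩, fun h => absurd h hy⟩
    choose r hr using hrep
    have hmain : ∀ p : {p : ↥A × ↥B × ↥A // F p ∉ A},
        ((↑(r (F ↑p)).1)⁻¹ * (↑(↑p : ↥A × ↥B × ↥A).1 : G) ∈ A ⊓ B) ∧
        ((↑(r (F ↑p)).2.2 : G) * (↑(↑p : ↥A × ↥B × ↥A).2.2 : G)⁻¹ ∈ A ⊓ B) :=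
      fun p => main ↑p (r (F ↑p)) p.2 (hr (F ↑p) (hFT ↑p))
    set J : {p : ↥A × ↥B × ↥A // F p ∉ A} →
        ↥(T \ (A : Set G)) × ↥(A ⊓ B : Subgroup G) × ↥(A ⊓ B : Subgroup G) :=
      fun p => (⟨F ↑p, ⟨hFT ↑p, p.2⟩⟩,
        ⟨(↑(r (F ↑p)).1)⁻¹ * (↑(↑p : ↥A × ↥B × ↥A).1 : G), (hmain p).1⟩,
        ⟨(↑(r (F ↑p)).2.2 : G) * (↑(↑p : ↥A × ↥B × ↥A).2.2 : G)⁻¹, (hmain p).2⟩) with hJ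
    have hJinj : Function.Injective J := by
      rintro ⟨p, hp⟩ ⟨p', hp'⟩ hJpq
      simp only [hJ, Prod.mk.injEq, Subtype.mk.injEq] at hJpq
      obtain ⟨h1, h2, h3⟩ := hJpq
      apply Subtype.ext
      replace h1 : F p = F p' := congrArg Subtype.val h1; rw [h1] at h2 h3
      have ha1 : (↑p.1 : G) = ↑p'.1 := mul_left_cancel h2
      have ha2 : (↑p.2.2 : G) = ↑p'.2.2 := inv_injective (mul_left_cancel h3)
      have hb : (↑p.2.1 : G) = ↑p'.2.1 := by
        have hFp : (↑p.1 : G) * ↑p.2.1 * ↑p.2.2 = (↑p'.1 : G) * ↑p'.2.1 * ↑p'.2.2 := h1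
        rw [← ha1, ← ha2] at hFp
        exact mul_left_cancel (mul_right_cancel hFp)
      exact Prod.ext (Subtype.ext ha1) (Prod.ext (Subtype.ext hb) (Subtype.ext ha2))
    calc Nat.card {p : ↥A × ↥B × ↥A // F p ∉ A}
        ≤ Nat.card (↥(T \ (A : Set G)) × ↥(A ⊓ B : Subgroup G) × ↥(A ⊓ B : Subgroup G)) :=
          Nat.card_le_card_of_injective J hJinj
      _ = (T \ (A : Set G)).ncard * (k * k) := by
          rw [Nat.card_prod, Nat.card_prod, hQ, Nat.card_coe_set_eq]
  have htot : Nat.card {p : ↥A × ↥B × ↥A // F p ∈ A} + Nat.card {p : ↥A × ↥B × ↥A // F p ∉ A}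
      = (n * k) * ((n * k) * (n * k)) := by
    have hsplit : Nat.card (↥A × ↥B × ↥A) =
        Nat.card {p : ↥A × ↥B × ↥A // F p ∈ A} + Nat.card {p : ↥A × ↥B × ↥A // F p ∉ A} := by
      rw [← Nat.card_sum]
      exact Nat.card_congr (Equiv.sumCompl (fun p => F p ∈ A)).symm
    rw [← hsplit, Nat.card_prod, Nat.card_prod, hA, hB]
  have hX : n ^ 3 * k ≤ n ^ 2 * k + (T \ (A : Set G)).ncard := by
    have h1 : (n * k) * ((n * k) * (n * k)) ≤ (n * k) * (k * (n * k)) +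
        (T \ (A : Set G)).ncard * (k * k) := by
      rw [← htot, ← hin]
      exact Nat.add_le_add_left hout _
    have h2 : (n ^ 3 * k) * (k * k) ≤ (n ^ 2 * k + (T \ (A : Set G)).ncard) * (k * k) := by
      calc (n ^ 3 * k) * (k * k) = (n * k) * ((n * k) * (n * k)) := by ring
        _ ≤ (n * k) * (k * (n * k)) + (T \ (A : Set G)).ncard * (k * k) := h1
        _ = (n ^ 2 * k + (T \ (A : Set G)).ncard) * (k * k) := by ring
    exact Nat.le_of_mul_le_mul_right h2 (Nat.mul_pos hk hk)
  have hcover : ∀ x : G, x ∈ T ∨ x ∈ K := by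
    by_contra hc
    push_neg at hc
    obtain ⟨x₀, hx₀T, hx₀K⟩ := hc
    have hdisj : Disjoint (T \ (A : Set G)) (insert x₀ (K : Set G)) := by
      rw [Set.disjoint_left]
      rintro x ⟨hxT, hxA⟩ hxU₂
      rcases hxU₂ with rfl | hxK
      · exact hx₀T hxT
      · exact hxA (hTsub K hAK hKB x hxT hxK)
    have hU₂ : (insert x₀ (K : Set G)).ncard = n ^ 2 * k + 1 := by
      rw [Set.ncard_insert_of_notMem hx₀K]
      rw [← Nat.card_coe_set_eq]
      have hKK : Nat.card ↥(K : Set G) = Nat.card K := rfl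
      rw [hKK, hKcard]
    have hle : (T \ (A : Set G)).ncard + (insert x₀ (K : Set G)).ncard ≤ n ^ 3 * k := by
      rw [← Set.ncard_union_eq hdisj]
      calc ((T \ (A : Set G)) ∪ insert x₀ (K : Set G)).ncard
          ≤ (Set.univ : Set G).ncard := Set.ncard_le_ncard (Set.subset_univ _)
        _ = Nat.card G := Set.ncard_univ G
        _ = n ^ 3 * k := hG
    omega
  intro x hx
  have hxM' : x ∈ M' := hx
  have hxH : x ∈ H := hM'H hxM'
  rcases hcover x with hxT | hxK
  · exact SetLike.mem_coe.mpr (hAK (hTsub H hAH hHB x hxT hxH))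
  · exact hxK

end Helpers

/-- `M` is uniquely determined by `A` and `B`: if `M'` also satisfies
conditions (1)–(4) with the same `A`, `B`, then `M' = M`. -/
theorem stmt8 {G : Type*} [Group G] [Finite G]
    (A B M AM BM : Subgroup G) (n k : ℕ) (hn : 1 < n)
    (hk : k = Nat.card (A ⊓ B : Subgroup G))
    (hA : Nat.card A = n * k) (hB : Nat.card B = n * k) (hM : Nat.card M = n * k)
    (hG : Nat.card G = n ^ 3 * k)
    (hAM : (AM : Set G) = (A : Set G) * (M : Set G))
    (hBM : (BM : Set G) = (B : Set G) * (M : Set G))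
    (hAMcard : Nat.card AM = n ^ 2 * k) (hBMcard : Nat.card BM = n ^ 2 * k)
    (h3 : ∀ g : G, ∃ a ∈ A, ∃ m ∈ M, ∃ b ∈ B, g = a * m * b)
    (h4 : ((A : Set G) * (B : Set G)) ∩ ((B : Set G) * (A : Set G)) =
      (A : Set G) ∪ (B : Set G))
    (M' AM' BM' : Subgroup G)
    (hM' : Nat.card M' = n * k)
    (hAM' : (AM' : Set G) = (A : Set G) * (M' : Set G))
    (hBM' : (BM' : Set G) = (B : Set G) * (M' : Set G))
    (hAMcard' : Nat.card AM' = n ^ 2 * k) (hBMcard' : Nat.card BM' = n ^ 2 * k)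
    (h3' : ∀ g : G, ∃ a ∈ A, ∃ m ∈ M', ∃ b ∈ B, g = a * m * b) :
    M' = M := by
  have hk0 : 0 < k := by
    rw [hk]; exact Nat.card_pos
  have hQ : Nat.card (A ⊓ B : Subgroup G) = k := hk.symm
  have hQ' : Nat.card (B ⊓ A : Subgroup G) = k := by rw [inf_comm]; exact hQ
  have hpos : 0 < n ^ 3 * k := Nat.mul_pos (pow_pos (by omega) 3) hk0
  -- basic inclusions
  have hA_AM : A ≤ AM := by
    intro a ha
    rw [← SetLike.mem_coe, hAM]
    exact ⟨a, ha, 1, one_mem M, mul_one a⟩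
  have hA_AM' : A ≤ AM' := by
    intro a ha
    rw [← SetLike.mem_coe, hAM']
    exact ⟨a, ha, 1, one_mem M', mul_one a⟩
  have hB_BM : B ≤ BM := by
    intro b hb
    rw [← SetLike.mem_coe, hBM]
    exact ⟨b, hb, 1, one_mem M, mul_one b⟩
  have hB_BM' : B ≤ BM' := by
    intro b hb
    rw [← SetLike.mem_coe, hBM']
    exact ⟨b, hb, 1, one_mem M', mul_one b⟩
  have hM_AM : M ≤ AM := by
    intro m hm
    rw [← SetLike.mem_coe, hAM]
    exact ⟨1, one_mem A, m, hm, one_mul m⟩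
  have hM_BM : M ≤ BM := by
    intro m hm
    rw [← SetLike.mem_coe, hBM]
    exact ⟨1, one_mem B, m, hm, one_mul m⟩
  have hM'_AM' : M' ≤ AM' := by
    intro m hm
    rw [← SetLike.mem_coe, hAM']
    exact ⟨1, one_mem A, m, hm, one_mul m⟩
  have hM'_BM' : M' ≤ BM' := by
    intro m hm
    rw [← SetLike.mem_coe, hBM']
    exact ⟨1, one_mem B, m, hm, one_mul m⟩
  -- surjectivity of various products
  have hAMB : (AM : Set G) * (B : Set G) = Set.univ := by
    rw [Set.eq_univ_iff_forall]
    intro g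
    obtain ⟨a, ha, m, hm, b, hb, hg⟩ := h3 g
    rw [hg]
    exact Set.mul_mem_mul (by rw [hAM]; exact Set.mul_mem_mul ha hm) hb
  have hAM'B : (AM' : Set G) * (B : Set G) = Set.univ := by
    rw [Set.eq_univ_iff_forall]
    intro g
    obtain ⟨a, ha, m, hm, b, hb, hg⟩ := h3' g
    rw [hg]
    exact Set.mul_mem_mul (by rw [hAM']; exact Set.mul_mem_mul ha hm) hb
  have hBMA : (BM : Set G) * (A : Set G) = Set.univ := by
    rw [Set.eq_univ_iff_forall]
    intro g
    obtain ⟨a, ha, m, hm, b, hb, hg⟩ := h3 g⁻¹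
    have hg' : g = b⁻¹ * m⁻¹ * a⁻¹ := by
      have : g = (a * m * b)⁻¹ := by rw [← hg, inv_inv]
      rw [this]; group
    rw [hg']
    exact Set.mul_mem_mul (by rw [hBM]; exact Set.mul_mem_mul (inv_mem hb) (inv_mem hm))
      (inv_mem ha)
  have hBM'A : (BM' : Set G) * (A : Set G) = Set.univ := by
    rw [Set.eq_univ_iff_forall]
    intro g
    obtain ⟨a, ha, m, hm, b, hb, hg⟩ := h3' g⁻¹
    have hg' : g = b⁻¹ * m⁻¹ * a⁻¹ := by
      have : g = (a * m * b)⁻¹ := by rw [← hg, inv_inv]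
      rw [this]; group
    rw [hg']
    exact Set.mul_mem_mul (by rw [hBM']; exact Set.mul_mem_mul (inv_mem hb) (inv_mem hm))
      (inv_mem ha)
  have hAMBM : (AM : Set G) * (BM : Set G) = Set.univ := by
    rw [Set.eq_univ_iff_forall]
    intro g
    obtain ⟨a, ha, m, hm, b, hb, hg⟩ := h3 g
    rw [hg]
    exact Set.mul_mem_mul (by rw [hAM]; exact Set.mul_mem_mul ha hm)
      (hB_BM hb)
  -- the inf cardinality computations
  have hinf : ∀ U : Subgroup G, Nat.card U = n ^ 2 * k → (U : Set G) * (B : Set G) = Set.univ →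
      Nat.card (U ⊓ B : Subgroup G) ≤ Nat.card (A ⊓ B : Subgroup G) := by
    intro U hUcard hUuniv
    have e := card_mul_univ' U B hUuniv
    rw [hUcard, hB, hG] at e
    have e' : n ^ 3 * k * k = n ^ 3 * k * Nat.card (U ⊓ B : Subgroup G) := by
      rw [← e]; ring
    rw [hQ]
    exact le_of_eq (Nat.eq_of_mul_eq_mul_left hpos e').symm
  have hinf' : ∀ V : Subgroup G, Nat.card V = n ^ 2 * k → (V : Set G) * (A : Set G) = Set.univ →
      Nat.card (V ⊓ A : Subgroup G) ≤ Nat.card (B ⊓ A : Subgroup G) := by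
    intro V hVcard hVuniv
    have e := card_mul_univ' V A hVuniv
    rw [hVcard, hA, hG] at e
    have e' : n ^ 3 * k * k = n ^ 3 * k * Nat.card (V ⊓ A : Subgroup G) := by
      rw [← e]; ring
    rw [hQ']
    exact le_of_eq (Nat.eq_of_mul_eq_mul_left hpos e').symm
  have hAMB_mem : ∀ x : G, x ∈ B → x ∈ AM → x ∈ A :=
    mem_of_mem_inf' A B AM hA_AM (hinf AM hAMcard hAMB)
  have hAM'B_mem : ∀ x : G, x ∈ B → x ∈ AM' → x ∈ A :=
    mem_of_mem_inf' A B AM' hA_AM' (hinf AM' hAMcard' hAM'B)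
  have hBMA_mem : ∀ x : G, x ∈ A → x ∈ BM → x ∈ B :=
    mem_of_mem_inf' B A BM hB_BM (hinf' BM hBMcard hBMA)
  have hBM'A_mem : ∀ x : G, x ∈ A → x ∈ BM' → x ∈ B :=
    mem_of_mem_inf' B A BM' hB_BM' (hinf' BM' hBMcard' hBM'A)
  -- the two key applications
  have hM'AM : (M' : Set G) ⊆ (AM : Set G) :=
    key_aba' A B M' AM AM' n k hk0 hG hA hB hQ hA_AM hAMcard hAMB_mem hA_AM' hAM'B_mem
      hM'_AM' h4
  have h4' : ((B : Set G) * (A : Set G)) ∩ ((A : Set G) * (B : Set G)) =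
      (B : Set G) ∪ (A : Set G) := by
    rw [Set.inter_comm, h4, Set.union_comm]
  have hM'BM : (M' : Set G) ⊆ (BM : Set G) :=
    key_aba' B A M' BM BM' n k hk0 hG hB hA hQ' hB_BM hBMcard hBMA_mem hB_BM' hBM'A_mem
      hM'_BM' h4'
  -- M = AM ⊓ BM
  have hinfAMBM : Nat.card (AM ⊓ BM : Subgroup G) = n * k := by
    have e := card_mul_univ' AM BM hAMBM
    rw [hAMcard, hBMcard, hG] at e
    have e' : n ^ 3 * k * (n * k) = n ^ 3 * k * Nat.card (AM ⊓ BM : Subgroup G) := by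
      rw [← e]; ring
    exact (Nat.eq_of_mul_eq_mul_left hpos e').symm
  have hMeq : M = AM ⊓ BM := by
    apply Subgroup.eq_of_le_of_card_ge (le_inf hM_AM hM_BM)
    rw [hinfAMBM, hM]
  have hM'M : M' ≤ M := by
    intro x hx
    rw [hMeq]
    exact Subgroup.mem_inf.mpr ⟨hM'AM hx, hM'BM hx⟩
  exact Subgroup.eq_of_le_of_card_ge hM'M (by rw [hM, hM'])
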